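/- In the suffix heap, if the maximal-reach pointer of the node labelled i points to the node labelled j at depth d, then for every k with i ≤ k ≤ j, the suffix S[SA[k]..n] has S[SA[j]..SA[j]+d−1] as a prefix (all suffixes of lexicographic rank between i and j share the same length-d prefix). -/
import Mathlib

lemma prefix_of_lex_between {α : Type} [LinearOrder α] :
    ∀ (P A B C : List α), P <+: A → P <+: C →
      List.Lex (· < ·) A B → List.Lex (· < ·) B C → P <+: B := by
  intro P
  induction P with
  | nil => intro _ _ _ _ _ _ _; exact List.nil_prefix
  | cons p P ih =>
    intro A B C hPA hPC hAB hBC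
    obtain ⟨A', rfl⟩ := hPA
    obtain ⟨C', rfl⟩ := hPC
    cases hAB with
    | cons hAB' =>
      cases hBC with
      | rel h => exact absurd h (lt_irrefl _)
      | cons hBC' =>
        exact (List.prefix_cons_inj p).mpr (ih _ _ _ ⟨A', rfl⟩ ⟨C', rfl⟩ hAB' hBC')
    | rel hpb =>
      cases hBC with
      | rel h => exact absurd (hpb.trans h) (lt_irrefl _)
      | cons _ => exact absurd hpb (lt_irrefl _)

/-- In the suffix heap of `S`, if the maximal-reach pointer of
the node labelled `i` points to the node labelled `j` at depth `d`, then for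
every `k` with `i ≤ k ≤ j`, the suffix `S[SA(k)..n]` has
`S[SA(j)..SA(j)+d-1]` as a prefix: all suffixes of lexicographic rank between
`i` and `j` share the same length-`d` prefix. -/
theorem suffixHeap_ranks_between_share_prefix
    {α : Type} [LinearOrder α]
    (S T : List α) (c : α) (hS : S = T ++ [c]) (hc : c ∉ T)
    (SA : ℕ → ℕ)
    (hSA : Set.BijOn SA (Set.Icc 1 S.length) (Set.Icc 1 S.length))
    (hSAsorted : ∀ i j : ℕ, 1 ≤ i → i < j → j ≤ S.length →
      List.Lex (· < ·) (S.drop (SA i - 1)) (S.drop (SA j - 1)))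
    (nodes : Finset (List α)) (nodeOf : ℕ → List α)
    (hpc : ∀ p ∈ nodes, ∀ q : List α, q <+: p → q ∈ nodes)
    (hbij : Set.BijOn nodeOf (Set.Iic S.length) ↑nodes)
    (hroot : nodeOf 0 = ([] : List α))
    (hrank : ∀ i j : ℕ, i ≤ S.length → j ≤ S.length → i < j → nodeOf i < nodeOf j)
    (hpath : ∀ i : ℕ, 1 ≤ i → i ≤ S.length → nodeOf i <+: S.drop (SA i - 1)) :
    ∀ i j d : ℕ, 1 ≤ i → i ≤ S.length → 1 ≤ j → j ≤ S.length →
      (nodeOf j).length = d →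
      -- `nodeOf j` is the maximal reach of the node labelled `i`
      (nodeOf j <+: S.drop (SA i - 1)) →
      (∀ k ≤ S.length, nodeOf k <+: S.drop (SA i - 1) →
        (nodeOf k).length ≤ (nodeOf j).length) →
      ∀ k : ℕ, i ≤ k → k ≤ j →
        ((S.drop (SA j - 1)).take d) <+: S.drop (SA k - 1) := by
  intro i j d hi1 hiS hj1 hjS hlen hij _hmax k hik hkj
  have hpj : nodeOf j <+: S.drop (SA j - 1) := hpath j hj1 hjS
  have htake : (S.drop (SA j - 1)).take d = nodeOf j := by
    obtain ⟨t, ht⟩ := hpj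
    rw [← ht, ← hlen, List.take_left]
  rw [htake]
  rcases eq_or_lt_of_le hkj with rfl | hkj'
  · exact hpj
  rcases eq_or_lt_of_le hik with rfl | hik'
  · exact hij
  exact prefix_of_lex_between _ _ _ _ hij hpj
    (hSAsorted i k hi1 hik' (hkj.trans hjS))
    (hSAsorted k j (hi1.trans hik) hkj' hjS)
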